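/- Suppose b < 0, a > 0, c > 0, √(a²+c²) > |b|, and α ∈ (0, π/2) is the phase angle. Let γ₁ = arcsin(|b|/√(a²+c²)). If max{-θ₀, 2(γ₁ - α)} < θ < min{π, 2(π - γ₁ - α)} with 0 < θ₀ < π/4, then f''(θ) > 0. -/

import Mathlib

open Real

private lemma numpos_aux {b s t co g : ℝ} (hb : b < 0) (hs : 0 < s) (hsb : -b < s)
    (ht : -b < s * t) (ht1 : t ≤ 1) (hpy : t ^ 2 + co ^ 2 = 1)
    (hg : g = s ^ 2 + b ^ 2 + 2 * b * s * t) :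
    0 < -(b * s * t) * g - (b * s * co) ^ 2 := by
  subst hg
  have h1 : 0 < s * t + b := by linarith
  have h2 : 0 < s + b * t := by nlinarith
  have hco : (b * s * co) ^ 2 = b ^ 2 * s ^ 2 * (1 - t ^ 2) := by
    have : co ^ 2 = 1 - t ^ 2 := by linarith
    rw [mul_pow, mul_pow, this]
  rw [hco]
  nlinarith [mul_pos (mul_pos (mul_pos (neg_pos.mpr hb) hs) h1) h2]

set_option maxHeartbeats 1000000 in
theorem stmt_9 (a b c α θ₀ θ : ℝ)
    (hb : b < 0) (ha : a > 0) (hc : c > 0)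
    (hgt : Real.sqrt (a ^ 2 + c ^ 2) > |b|)
    (hα : α ∈ Set.Ioo 0 (π / 2))
    (hsin : Real.sin α = c / Real.sqrt (a ^ 2 + c ^ 2))
    (hcos : Real.cos α = a / Real.sqrt (a ^ 2 + c ^ 2))
    (hθ₀ : 0 < θ₀ ∧ θ₀ < π / 4)
    (γ₁ : ℝ) (hγ₁ : γ₁ = Real.arcsin (|b| / Real.sqrt (a ^ 2 + c ^ 2)))
    (hθl : max (-θ₀) (2 * (γ₁ - α)) < θ)
    (hθr : θ < min π (2 * (π - γ₁ - α)))
    (f : ℝ → ℝ)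
    (hf : ∀ x : ℝ, f x = Real.sqrt (a ^ 2 + b ^ 2 + c ^ 2 +
        2 * b * Real.sqrt (a ^ 2 + c ^ 2) * Real.sin (x / 2 + α))) :
    0 < deriv (deriv f) θ := by
  set s : ℝ := Real.sqrt (a ^ 2 + c ^ 2) with hs_def
  have hs : 0 < s := Real.sqrt_pos.mpr (by positivity)
  have hs2 : s ^ 2 = a ^ 2 + c ^ 2 := Real.sq_sqrt (by positivity)
  have habs : |b| = -b := abs_of_neg hb
  have hsb : -b < s := by rw [← habs]; exact hgt
  -- positivity of the inner function
  have hgpos : ∀ x : ℝ, 0 < a ^ 2 + b ^ 2 + c ^ 2 + 2 * b * s * Real.sin (x / 2 + α) := by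
    intro x
    have h1 : Real.sin (x / 2 + α) ≤ 1 := Real.sin_le_one _
    nlinarith [sq_nonneg (s + b), mul_nonneg (by nlinarith : (0:ℝ) ≤ -2 * b * s)
      (by linarith : 0 ≤ 1 - Real.sin (x / 2 + α))]
  -- derivative of the inner function
  have hgd : ∀ x : ℝ, HasDerivAt
      (fun y => a ^ 2 + b ^ 2 + c ^ 2 + 2 * b * s * Real.sin (y / 2 + α))
      (b * s * Real.cos (x / 2 + α)) x := by
    intro x
    have h1 : HasDerivAt (fun y : ℝ => y / 2 + α) (1 / 2) x := by
      simpa using ((hasDerivAt_id x).div_const 2).add_const α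
    have h2 := (Real.hasDerivAt_sin (x / 2 + α)).comp x h1
    have h3 := (h2.const_mul (2 * b * s)).const_add (a ^ 2 + b ^ 2 + c ^ 2)
    refine h3.congr_deriv ?_
    ring
  -- first derivative of f
  have hfe : f = fun x => Real.sqrt (a ^ 2 + b ^ 2 + c ^ 2 +
      2 * b * s * Real.sin (x / 2 + α)) := funext hf
  have hfd : ∀ x : ℝ, HasDerivAt f
      (b * s * Real.cos (x / 2 + α) /
        (2 * Real.sqrt (a ^ 2 + b ^ 2 + c ^ 2 + 2 * b * s * Real.sin (x / 2 + α)))) x := by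
    intro x
    have h1 := (Real.hasDerivAt_sqrt (ne_of_gt (hgpos x))).comp x (hgd x)
    rw [hfe]
    refine h1.congr_deriv ?_
    ring
  have hdf : deriv f = fun x => b * s * Real.cos (x / 2 + α) /
      (2 * Real.sqrt (a ^ 2 + b ^ 2 + c ^ 2 + 2 * b * s * Real.sin (x / 2 + α))) :=
    funext fun x => (hfd x).deriv
  -- abbreviations at θ
  set u : ℝ := θ / 2 + α with hu_def
  set q : ℝ := Real.sqrt (a ^ 2 + b ^ 2 + c ^ 2 + 2 * b * s * Real.sin u) with hq_def
  have hq : 0 < q := Real.sqrt_pos.mpr (hgpos θ)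
  have hq2 : q ^ 2 = a ^ 2 + b ^ 2 + c ^ 2 + 2 * b * s * Real.sin u :=
    Real.sq_sqrt (le_of_lt (hgpos θ))
  -- second derivative at θ
  have hNd : HasDerivAt (fun x => b * s * Real.cos (x / 2 + α))
      (-(b * s * Real.sin u) * (1 / 2)) θ := by
    have h1 : HasDerivAt (fun y : ℝ => y / 2 + α) (1 / 2) θ := by
      simpa using ((hasDerivAt_id θ).div_const 2).add_const α
    have h2 := (Real.hasDerivAt_cos u).comp θ h1
    have h3 := h2.const_mul (b * s)
    refine h3.congr_deriv ?_
    ring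
  have hDd : HasDerivAt (fun x => 2 * Real.sqrt (a ^ 2 + b ^ 2 + c ^ 2 +
      2 * b * s * Real.sin (x / 2 + α)))
      (2 * (1 / (2 * q) * (b * s * Real.cos u))) θ := by
    exact ((Real.hasDerivAt_sqrt (ne_of_gt (hgpos θ))).comp θ (hgd θ)).const_mul 2
  have hDne : 2 * q ≠ 0 := by positivity
  have hdiv := hNd.div hDd hDne
  -- sin bound : -b / s < sin u
  have hr1 : (-b) / s < 1 := (div_lt_one hs).mpr hsb
  have hr0 : 0 < (-b) / s := div_pos (by linarith) hs
  have hγ₁' : γ₁ = Real.arcsin ((-b) / s) := by rw [hγ₁, habs]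
  have hsinγ : Real.sin γ₁ = (-b) / s := by
    rw [hγ₁']; exact Real.sin_arcsin (by linarith) (le_of_lt hr1)
  have hγpos : 0 < γ₁ := by rw [hγ₁']; exact Real.arcsin_pos.mpr hr0
  have hγlt : γ₁ < π / 2 := by rw [hγ₁']; exact Real.arcsin_lt_pi_div_two.mpr hr1
  have hul : γ₁ < u := by
    have := lt_of_le_of_lt (le_max_right (-θ₀) (2 * (γ₁ - α))) hθl
    rw [hu_def]; linarith
  have hur : u < π - γ₁ := by
    have := lt_of_lt_of_le hθr (min_le_right π (2 * (π - γ₁ - α)))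
    rw [hu_def]; linarith
  have hsinu : (-b) / s < Real.sin u := by
    rcases le_or_gt u (π / 2) with h | h
    · rw [← hsinγ]
      exact Real.sin_lt_sin_of_lt_of_le_pi_div_two (by linarith) h hul
    · have h2 : Real.sin u = Real.sin (π - u) := (Real.sin_pi_sub u).symm
      rw [h2, ← hsinγ]
      exact Real.sin_lt_sin_of_lt_of_le_pi_div_two (by linarith) (by linarith) (by linarith)
  have hsbu : -b < s * Real.sin u := by
    rw [div_lt_iff₀ hs] at hsinu; linarith [hsinu]
  have hsin1 : Real.sin u ≤ 1 := Real.sin_le_one u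
  -- conclude
  have hdiv' : HasDerivAt (deriv f)
      (((-(b * s * Real.sin u) * (1 / 2)) * (2 * q) -
        b * s * Real.cos u * (2 * (1 / (2 * q) * (b * s * Real.cos u)))) / (2 * q) ^ 2) θ := by
    rw [hdf]; exact hdiv
  rw [hdiv'.deriv]
  apply div_pos
  · -- numerator positive
    have hE : 0 < -(b * s * Real.sin u) * q ^ 2 - (b * s * Real.cos u) ^ 2 :=
      numpos_aux hb hs hsb hsbu hsin1 (Real.sin_sq_add_cos_sq u)
        (by rw [hq2, hs2]; ring)
    have heq : -(b * s * Real.sin u) * (1 / 2) * (2 * q) -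
        b * s * Real.cos u * (2 * (1 / (2 * q) * (b * s * Real.cos u))) =
        (-(b * s * Real.sin u) * q ^ 2 - (b * s * Real.cos u) ^ 2) / q := by
      field_simp
    rw [heq]
    exact div_pos hE hq
  · positivity
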